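/- Let a, b ∈ [−1, 1] and λ ∈ ℝ. Then the 4×4 complex matrix (I + a·σ1) ⊗ (I + b·σ1) + λ·(σ3⊗σ3) is positive semidefinite if and only if (1 − a²)(1 − b²) ≥ λ². -/

import Mathlib

open Matrix Kronecker ComplexOrder

noncomputable def σ1 : Matrix (Fin 2) (Fin 2) ℂ := !![0, 1; 1, 0]
noncomputable def σ2 : Matrix (Fin 2) (Fin 2) ℂ := !![0, -Complex.I; Complex.I, 0]
noncomputable def σ3 : Matrix (Fin 2) (Fin 2) ℂ := !![1, 0; 0, -1]

private lemma quad_aux (p q l u v : ℝ) (hp : 0 ≤ p) (hq : 0 ≤ q) (hl : l ^ 2 ≤ p * q) :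
    0 ≤ p * u ^ 2 + 2 * l * (u * v) + q * v ^ 2 := by
  rcases eq_or_lt_of_le hp with h | h
  · have hl0 : l = 0 := by nlinarith [sq_nonneg l]
    rw [hl0, ← h]
    have := mul_nonneg hq (sq_nonneg v)
    nlinarith
  · nlinarith [sq_nonneg (p * u + l * v), mul_nonneg (sub_nonneg.2 hl) (sq_nonneg v)]

private lemma qform_nonneg (a b lam : ℝ) (ha1 : -1 ≤ a) (ha2 : a ≤ 1) (hb1 : -1 ≤ b)
    (hb2 : b ≤ 1) (hl : lam ^ 2 ≤ (1 - a ^ 2) * (1 - b ^ 2)) (y0 y1 y2 y3 : ℝ) :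
    0 ≤ (1 + lam) * (y0 ^ 2 + y3 ^ 2) + (1 - lam) * (y1 ^ 2 + y2 ^ 2)
      + 2 * b * (y0 * y1 + y2 * y3) + 2 * a * (y0 * y2 + y1 * y3)
      + 2 * (a * b) * (y0 * y3 + y1 * y2) := by
  have hpq : lam ^ 2 ≤ ((1 + a) * (1 + b)) * ((1 - a) * (1 - b)) := by
    rw [show ((1 + a) * (1 + b)) * ((1 - a) * (1 - b)) = (1 - a ^ 2) * (1 - b ^ 2) by ring]
    exact hl
  have hrs : lam ^ 2 ≤ ((1 + a) * (1 - b)) * ((1 - a) * (1 + b)) := by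
    rw [show ((1 + a) * (1 - b)) * ((1 - a) * (1 + b)) = (1 - a ^ 2) * (1 - b ^ 2) by ring]
    exact hl
  have h1 := quad_aux ((1 + a) * (1 + b)) ((1 - a) * (1 - b)) lam
    ((y0 + y1 + y2 + y3) / 2) ((y0 - y1 - y2 + y3) / 2)
    (mul_nonneg (by linarith) (by linarith)) (mul_nonneg (by linarith) (by linarith)) hpq
  have h2 := quad_aux ((1 + a) * (1 - b)) ((1 - a) * (1 + b)) lam
    ((y0 - y1 + y2 - y3) / 2) ((y0 + y1 - y2 - y3) / 2)
    (mul_nonneg (by linarith) (by linarith)) (mul_nonneg (by linarith) (by linarith)) hrs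
  nlinarith [h1, h2]

set_option maxHeartbeats 1600000 in
theorem stmt6 (a b lam : ℝ) (ha : a ∈ Set.Icc (-1 : ℝ) 1) (hb : b ∈ Set.Icc (-1 : ℝ) 1) :
    ((((1 : Matrix (Fin 2) (Fin 2) ℂ) + (a : ℂ) • σ1)
        ⊗ₖ ((1 : Matrix (Fin 2) (Fin 2) ℂ) + (b : ℂ) • σ1))
      + (lam : ℂ) • (σ3 ⊗ₖ σ3)).PosSemidef
    ↔ lam ^ 2 ≤ (1 - a ^ 2) * (1 - b ^ 2) := by
  obtain ⟨ha1, ha2⟩ := ha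
  obtain ⟨hb1, hb2⟩ := hb
  rw [Matrix.posSemidef_iff_dotProduct_mulVec]
  constructor
  · rintro ⟨-, hquad⟩
    have key : ∀ t : ℝ, 0 ≤ (4 * ((1 + a) * (1 + b))) * (t * t) + (8 * lam) * t
        + 4 * ((1 - a) * (1 - b)) := by
      intro t
      have h := hquad (fun p => (!![(t : ℂ) + 1, (t : ℂ) - 1; (t : ℂ) - 1, (t : ℂ) + 1]) p.1 p.2)
      simp only [σ1, σ3, Matrix.mulVec, dotProduct, Fintype.sum_prod_type,
        Fin.sum_univ_two, Matrix.add_apply, Matrix.smul_apply, Matrix.kroneckerMap_apply,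
        Matrix.one_apply, Pi.star_apply, Matrix.cons_val', Matrix.cons_val_zero,
        Matrix.cons_val_one, Matrix.head_cons, Matrix.head_fin_const, Matrix.empty_val',
        Matrix.cons_val_fin_one, smul_eq_mul, Prod.fst_zero, Prod.snd_zero, Prod.fst_one,
        Prod.snd_one, map_add, map_sub, _root_.map_one, Complex.conj_ofReal] at h
      norm_num at h
      rw [Complex.le_def] at h
      have h1 := h.1
      simp only [Complex.zero_re, Complex.add_re, Complex.sub_re, Complex.mul_re,
        Complex.add_im, Complex.sub_im, Complex.mul_im, Complex.ofReal_re, Complex.ofReal_im,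
        Complex.one_re, Complex.one_im, Complex.neg_re, Complex.neg_im, Complex.zero_re,
        Complex.zero_im] at h1
      nlinarith [h1]
    have hd := discrim_le_zero key
    rw [discrim] at hd
    nlinarith [hd]
  · intro hl
    constructor
    · ext i j
      obtain ⟨i1, i2⟩ := i
      obtain ⟨j1, j2⟩ := j
      fin_cases i1 <;> fin_cases i2 <;> fin_cases j1 <;> fin_cases j2 <;>
        simp [σ1, σ3, Matrix.conjTranspose_apply, Matrix.kroneckerMap_apply, Matrix.one_apply,
          Complex.conj_ofReal, map_add, _root_.map_mul, map_sub, _root_.map_one]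
    · intro x
      simp only [σ1, σ3, Matrix.mulVec, dotProduct, Fintype.sum_prod_type,
        Fin.sum_univ_two, Matrix.add_apply, Matrix.smul_apply, Matrix.kroneckerMap_apply,
        Matrix.one_apply, Pi.star_apply, Matrix.cons_val', Matrix.cons_val_zero,
        Matrix.cons_val_one, Matrix.head_cons, Matrix.head_fin_const, Matrix.empty_val',
        Matrix.cons_val_fin_one, smul_eq_mul]
      norm_num
      have hre := qform_nonneg a b lam ha1 ha2 hb1 hb2 hl
        (x 0).re (x (0, 1)).re (x (1, 0)).re (x 1).re
      have him := qform_nonneg a b lam ha1 ha2 hb1 hb2 hl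
        (x 0).im (x (0, 1)).im (x (1, 0)).im (x 1).im
      have h : (0 : ℂ) ≤ (((1 + lam) * ((x 0).re ^ 2 + (x 1).re ^ 2)
          + (1 - lam) * ((x (0, 1)).re ^ 2 + (x (1, 0)).re ^ 2)
          + 2 * b * ((x 0).re * (x (0, 1)).re + (x (1, 0)).re * (x 1).re)
          + 2 * a * ((x 0).re * (x (1, 0)).re + (x (0, 1)).re * (x 1).re)
          + 2 * (a * b) * ((x 0).re * (x 1).re + (x (0, 1)).re * (x (1, 0)).re))
        + ((1 + lam) * ((x 0).im ^ 2 + (x 1).im ^ 2)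
          + (1 - lam) * ((x (0, 1)).im ^ 2 + (x (1, 0)).im ^ 2)
          + 2 * b * ((x 0).im * (x (0, 1)).im + (x (1, 0)).im * (x 1).im)
          + 2 * a * ((x 0).im * (x (1, 0)).im + (x (0, 1)).im * (x 1).im)
          + 2 * (a * b) * ((x 0).im * (x 1).im + (x (0, 1)).im * (x (1, 0)).im)) : ℝ) := by
        exact Complex.zero_le_real.mpr (add_nonneg hre him)
      convert h using 1
      refine Complex.ext ?_ ?_ <;>
        simp only [Complex.ofReal_re, Complex.ofReal_im, Complex.add_re, Complex.add_im,
          Complex.sub_re, Complex.sub_im, Complex.mul_re, Complex.mul_im, Complex.one_re,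
          Complex.one_im, Complex.conj_re, Complex.conj_im, Complex.neg_re,
          Complex.neg_im, Prod.mk_zero_zero, Prod.mk_one_one] <;>
        ring
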